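/- Let U ∈ ℝ^{n×2k} be a matrix with orthonormal columns, let S = {Uz : z ∈ ℝ^{2k}, ‖Uz‖ = 1}, let τ > 0, let a₁, …, a_m be i.i.d. copies of an isotropic random vector a in ℝ^n, and let ε₁, …, ε_m be i.i.d. Rademacher (±1) random variables independent of the a_i. Then E[sup_{v ∈ S} |(1/m)·Σ_{i=1}^m ε_i · φ_τ(⟨a_i, v⟩)|] ≤ 4τ·√(2k/m). -/

import Mathlib

open MeasureTheory ProbabilityTheory Real

noncomputable section

/-- Euclidean dot product on `Fin n → ℝ`. -/
def dotp {n : ℕ} (x y : Fin n → ℝ) : ℝ := ∑ i, x i * y i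

/-- Squared Euclidean norm on `Fin n → ℝ`. -/
def euclNormSq {n : ℕ} (x : Fin n → ℝ) : ℝ := ∑ i, x i ^ 2

/-- Euclidean norm on `Fin n → ℝ`. -/
def euclNorm {n : ℕ} (x : Fin n → ℝ) : ℝ := Real.sqrt (euclNormSq x)

/-- A random vector is isotropic if `E[a aᵀ] = I`. -/
def IsIsotropic {Ω : Type*} [MeasurableSpace Ω] (μ : Measure Ω) {n : ℕ}
    (a : Ω → Fin n → ℝ) : Prop :=
  ∀ i j : Fin n, ∫ ω, a ω i * a ω j ∂μ = if i = j then 1 else 0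

/-- A random vector is `C`-heavy-tailed if all its one-dimensional marginals have fourth
moments bounded in terms of second moments: `(E⟨a,u⟩⁴)^(1/4) ≤ C (E⟨a,u⟩²)^(1/2)`. -/
def IsHeavyTailed {Ω : Type*} [MeasurableSpace Ω] (μ : Measure Ω) {n : ℕ}
    (C : ℝ) (a : Ω → Fin n → ℝ) : Prop :=
  (∀ u : Fin n → ℝ, Integrable (fun ω => (dotp (a ω) u) ^ 4) μ) ∧
  ∀ u : Fin n → ℝ,
    (∫ ω, (dotp (a ω) u) ^ 4 ∂μ) ^ ((1 : ℝ)/4) ≤ C * (∫ ω, (dotp (a ω) u) ^ 2 ∂μ) ^ ((1 : ℝ)/2)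

/-- Truncated quadratic function `φ_τ`. -/
def phiTrunc (τ u : ℝ) : ℝ := if |u| ≤ τ then u ^ 2 else τ ^ 2


namespace RPTQB


/-- sign of a Bool -/
def sg (b : Bool) : ℝ := if b then 1 else -1

lemma sg_abs (b : Bool) : |sg b| = 1 := by cases b <;> simp [sg]

lemma sg_not (b : Bool) : sg (!b) = - sg b := by cases b <;> simp [sg]

lemma sg_mul_self (b : Bool) : sg b * sg b = 1 := by cases b <;> norm_num [sg]

lemma sg_inj : Function.Injective sg := by
  intro x y h; cases x <;> cases y <;> simp_all [sg] <;> norm_num at h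

section Contraction

variable {V : Type*} {S : Set V}

lemma bddAbove_image_of_bound {g : V → ℝ} {C : ℝ} (h : ∀ v ∈ S, g v ≤ C) :
    BddAbove (g '' S) := by
  refine ⟨C, ?_⟩
  rintro _ ⟨v, hv, rfl⟩
  exact h v hv

/-- One-coordinate contraction step. -/
lemma one_coord (hS : S.Nonempty) (A u : V → ℝ) (φ : ℝ → ℝ) (L : ℝ)
    (hφ : ∀ x y : ℝ, |φ x - φ y| ≤ L * |x - y|) (hφ0 : φ 0 = 0)
    (CA Cu : ℝ) (hCA : ∀ v ∈ S, |A v| ≤ CA) (hCu : ∀ v ∈ S, |u v| ≤ Cu) :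
    sSup ((fun v => max (A v + φ (u v)) 0) '' S) +
      sSup ((fun v => max (A v - φ (u v)) 0) '' S) ≤
    sSup ((fun v => max (A v + L * u v) 0) '' S) +
      sSup ((fun v => max (A v - L * u v) 0) '' S) := by
  have hL : 0 ≤ L := by
    have h1 := hφ 1 0
    have h2 := abs_nonneg (φ 1 - φ 0)
    simp at h1
    nlinarith
  have hφabs : ∀ x : ℝ, |φ x| ≤ L * |x| := by
    intro x
    have := hφ x 0
    simpa [hφ0] using this
  -- bounds
  have hbd1 : ∀ v ∈ S, max (A v + φ (u v)) 0 ≤ CA + L * Cu := by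
    intro v hv
    have h1 : |φ (u v)| ≤ L * Cu := by
      calc |φ (u v)| ≤ L * |u v| := hφabs _
      _ ≤ L * Cu := by
        have := hCu v hv
        nlinarith [abs_nonneg (u v)]
    have h2 := hCA v hv
    have hCA0 : 0 ≤ CA := (abs_nonneg _).trans h2
    have hLCu0 : 0 ≤ L * Cu := (abs_nonneg _).trans h1
    have := abs_le.1 h2
    have := abs_le.1 h1
    apply max_le <;> nlinarith
  have hbd2 : ∀ v ∈ S, max (A v - φ (u v)) 0 ≤ CA + L * Cu := by
    intro v hv
    have h1 : |φ (u v)| ≤ L * Cu := by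
      calc |φ (u v)| ≤ L * |u v| := hφabs _
      _ ≤ L * Cu := by
        have := hCu v hv
        nlinarith [abs_nonneg (u v)]
    have h2 := hCA v hv
    have := abs_le.1 h2
    have := abs_le.1 h1
    apply max_le <;> nlinarith
  have hbd3 : ∀ v ∈ S, max (A v + L * u v) 0 ≤ CA + L * Cu := by
    intro v hv
    have h1 : |L * u v| ≤ L * Cu := by
      rw [abs_mul, abs_of_nonneg hL]
      have := hCu v hv
      nlinarith [abs_nonneg (u v)]
    have := abs_le.1 (hCA v hv)
    have := abs_le.1 h1
    apply max_le <;> nlinarith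
  have hbd4 : ∀ v ∈ S, max (A v - L * u v) 0 ≤ CA + L * Cu := by
    intro v hv
    have h1 : |L * u v| ≤ L * Cu := by
      rw [abs_mul, abs_of_nonneg hL]
      have := hCu v hv
      nlinarith [abs_nonneg (u v)]
    have := abs_le.1 (hCA v hv)
    have := abs_le.1 h1
    apply max_le <;> nlinarith
  set a := sSup ((fun v => max (A v + L * u v) 0) '' S) with ha
  set b := sSup ((fun v => max (A v - L * u v) 0) '' S) with hb
  have hmema : ∀ v ∈ S, max (A v + L * u v) 0 ≤ a := by
    intro v hv
    exact le_csSup (bddAbove_image_of_bound hbd3) ⟨v, hv, rfl⟩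
  have hmemb : ∀ v ∈ S, max (A v - L * u v) 0 ≤ b := by
    intro v hv
    exact le_csSup (bddAbove_image_of_bound hbd4) ⟨v, hv, rfl⟩
  obtain ⟨v₀, hv₀⟩ := hS
  have ha0 : 0 ≤ a := le_trans (le_max_right _ 0) (hmema v₀ hv₀)
  have hb0 : 0 ≤ b := le_trans (le_max_right _ 0) (hmemb v₀ hv₀)
  -- key pointwise estimate
  have key : ∀ v ∈ S, ∀ v' ∈ S,
      max (A v + φ (u v)) 0 + max (A v' - φ (u v')) 0 ≤ a + b := by
    intro v hv v' hv'
    rcases le_or_gt (A v + φ (u v)) 0 with hx | hx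
    · rcases le_or_gt (A v' - φ (u v')) 0 with hy | hy
      · rw [max_eq_right hx, max_eq_right hy]; linarith
      · rw [max_eq_right hx, max_eq_left hy.le, zero_add]
        -- y ≤ max(A v' + L u v', A v' - L u v') ≤ a or b
        have h1 : |φ (u v')| ≤ L * |u v'| := hφabs _
        rcases le_total 0 (u v') with hu' | hu'
        · have : A v' - φ (u v') ≤ A v' + L * u v' := by
            have := abs_le.1 h1
            rw [abs_of_nonneg hu'] at this
            linarith [this.1]
          calc A v' - φ (u v') ≤ max (A v' + L * u v') 0 := this.trans (le_max_left _ _)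
          _ ≤ a := hmema v' hv'
          _ ≤ a + b := by linarith
        · have : A v' - φ (u v') ≤ A v' - L * u v' := by
            have := abs_le.1 h1
            rw [abs_of_nonpos hu'] at this
            linarith [this.1]
          calc A v' - φ (u v') ≤ max (A v' - L * u v') 0 := this.trans (le_max_left _ _)
          _ ≤ b := hmemb v' hv'
          _ ≤ a + b := by linarith
    · rcases le_or_gt (A v' - φ (u v')) 0 with hy | hy
      · rw [max_eq_left hx.le, max_eq_right hy, add_zero]
        have h1 : |φ (u v)| ≤ L * |u v| := hφabs _
        rcases le_total 0 (u v) with hu' | hu'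
        · have : A v + φ (u v) ≤ A v + L * u v := by
            have := abs_le.1 h1
            rw [abs_of_nonneg hu'] at this
            linarith [this.2]
          calc A v + φ (u v) ≤ max (A v + L * u v) 0 := this.trans (le_max_left _ _)
          _ ≤ a := hmema v hv
          _ ≤ a + b := by linarith
        · have : A v + φ (u v) ≤ A v - L * u v := by
            have := abs_le.1 h1
            rw [abs_of_nonpos hu'] at this
            linarith [this.2]
          calc A v + φ (u v) ≤ max (A v - L * u v) 0 := this.trans (le_max_left _ _)
          _ ≤ b := hmemb v hv
          _ ≤ a + b := by linarith
      · rw [max_eq_left hx.le, max_eq_left hy.le]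
        have hlip := abs_le.1 (hφ (u v) (u v'))
        rcases le_total (u v') (u v) with huu | huu
        · have : (A v + φ (u v)) + (A v' - φ (u v')) ≤
              (A v + L * u v) + (A v' - L * u v') := by
            have : |u v - u v'| = u v - u v' := abs_of_nonneg (by linarith)
            rw [this] at hlip
            linarith [hlip.2]
          calc (A v + φ (u v)) + (A v' - φ (u v'))
              ≤ (A v + L * u v) + (A v' - L * u v') := this
          _ ≤ max (A v + L * u v) 0 + max (A v' - L * u v') 0 :=
              add_le_add (le_max_left _ _) (le_max_left _ _)
          _ ≤ a + b := add_le_add (hmema v hv) (hmemb v' hv')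
        · have : (A v + φ (u v)) + (A v' - φ (u v')) ≤
              (A v - L * u v) + (A v' + L * u v') := by
            have : |u v - u v'| = -(u v - u v') := abs_of_nonpos (by linarith)
            rw [this] at hlip
            linarith [hlip.1]
          calc (A v + φ (u v)) + (A v' - φ (u v'))
              ≤ (A v - L * u v) + (A v' + L * u v') := this
          _ ≤ max (A v - L * u v) 0 + max (A v' + L * u v') 0 :=
              add_le_add (le_max_left _ _) (le_max_left _ _)
          _ ≤ b + a := add_le_add (hmemb v hv) (hmema v' hv')
          _ = a + b := add_comm _ _
  -- conclude
  have h1 : sSup ((fun v => max (A v + φ (u v)) 0) '' S) ≤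
      a + b - sSup ((fun v => max (A v - φ (u v)) 0) '' S) := by
    apply csSup_le ((Set.Nonempty.image _ ⟨v₀, hv₀⟩))
    rintro _ ⟨v, hv, rfl⟩
    have : sSup ((fun v => max (A v - φ (u v)) 0) '' S) ≤
        a + b - max (A v + φ (u v)) 0 := by
      apply csSup_le ((Set.Nonempty.image _ ⟨v₀, hv₀⟩))
      rintro _ ⟨v', hv', rfl⟩
      have := key v hv v' hv'
      linarith
    linarith
  linarith

end Contraction





section SignSums

variable {V : Type*} {m : ℕ}

/-- sign-pattern sup functional -/
noncomputable def T (S : Set V) (g : Fin m → V → ℝ) (b : Fin m → Bool) : ℝ :=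
  sSup ((fun v => max (∑ i, sg (b i) * g i v) 0) '' S)

lemma sum_pair (j : Fin m) (F G : (Fin m → Bool) → ℝ)
    (h : ∀ b, F (Function.update b j true) + F (Function.update b j false) ≤
      G (Function.update b j true) + G (Function.update b j false)) :
    ∑ b, F b ≤ ∑ b, G b := by
  classical
  have hinv : Function.Involutive (fun b : Fin m → Bool => Function.update b j (!(b j))) := by
    intro b; funext i
    rcases eq_or_ne i j with rfl | hij
    · simp
    · simp [Function.update_of_ne hij]
  set e := hinv.toPerm with he
  have key : ∀ (H : (Fin m → Bool) → ℝ),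
      ∑ b, (H (Function.update b j true) + H (Function.update b j false)) =
        ∑ b, H b + ∑ b, H b := by
    intro H
    have h1 : ∀ b : Fin m → Bool,
        H (Function.update b j true) + H (Function.update b j false) = H b + H (e b) := by
      intro b
      have hb : Function.update b j (b j) = b := Function.update_eq_self j b
      have heb : e b = Function.update b j (!(b j)) := rfl
      cases hbj : b j with
      | true =>
        have hbt : Function.update b j true = b := by rw [← hbj]; exact hb
        simp only [heb, hbj, Bool.not_true, hbt]
      | false =>
        have hbt : Function.update b j false = b := by rw [← hbj]; exact hb
        simp only [heb, hbj, Bool.not_false, hbt]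
        exact add_comm _ _
    rw [Finset.sum_congr rfl (fun b _ => h1 b), Finset.sum_add_distrib]
    congr 1
    exact Equiv.sum_comp e H
  have h2 : ∑ b, (F (Function.update b j true) + F (Function.update b j false)) ≤
      ∑ b, (G (Function.update b j true) + G (Function.update b j false)) :=
    Finset.sum_le_sum fun b _ => h b
  rw [key F, key G] at h2
  linarith

end SignSums





section Contraction2

variable {V : Type*} {m : ℕ} {S : Set V}

lemma abs_sum_sg_le (g : Fin m → V → ℝ) (C : ℝ)
    (hC : ∀ i, ∀ v ∈ S, |g i v| ≤ C) (b : Fin m → Bool) :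
    ∀ v ∈ S, |∑ i, sg (b i) * g i v| ≤ (m : ℝ) * C := by
  intro v hv
  calc |∑ i, sg (b i) * g i v| ≤ ∑ i, |sg (b i) * g i v| :=
    Finset.abs_sum_le_sum_abs _ _
  _ ≤ ∑ _i : Fin m, C := by
    apply Finset.sum_le_sum
    intro i _
    rw [abs_mul, sg_abs, one_mul]
    exact hC i v hv
  _ = (m : ℝ) * C := by simp [mul_comm]

lemma replace_coord (hS : S.Nonempty) (f : Fin m → V → ℝ) (φ : ℝ → ℝ) (L Cf Cg : ℝ)
    (hφ : ∀ x y : ℝ, |φ x - φ y| ≤ L * |x - y|) (hφ0 : φ 0 = 0)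
    (j : Fin m) (g g' : Fin m → V → ℝ)
    (hgg' : ∀ i, i ≠ j → g i = g' i)
    (hgj : g j = fun v => φ (f j v)) (hg'j : g' j = fun v => L * f j v)
    (hfj : ∀ v ∈ S, |f j v| ≤ Cf)
    (hgbd : ∀ i, ∀ v ∈ S, |g i v| ≤ Cg) :
    ∑ b, T S g b ≤ ∑ b, T S g' b := by
  classical
  obtain ⟨v₀, hv₀⟩ := hS
  have hC0 : 0 ≤ Cg := (abs_nonneg _).trans (hgbd j v₀ hv₀)
  apply sum_pair j
  intro b
  set A : V → ℝ := fun v => ∑ i ∈ Finset.univ.erase j, sg (b i) * g i v with hA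
  have hsplit : ∀ (c : Bool) (v : V),
      ∑ i, sg (Function.update b j c i) * g i v = A v + sg c * φ (f j v) := by
    intro c v
    rw [← Finset.add_sum_erase _ _ (Finset.mem_univ j)]
    rw [Function.update_self, hgj, add_comm]
    congr 1
    apply Finset.sum_congr rfl
    intro i hi
    rw [Function.update_of_ne (Finset.mem_erase.1 hi).1]
  have hsplit' : ∀ (c : Bool) (v : V),
      ∑ i, sg (Function.update b j c i) * g' i v = A v + sg c * (L * f j v) := by
    intro c v
    rw [← Finset.add_sum_erase _ _ (Finset.mem_univ j)]
    rw [Function.update_self, hg'j, add_comm]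
    congr 1
    apply Finset.sum_congr rfl
    intro i hi
    rw [Function.update_of_ne (Finset.mem_erase.1 hi).1,
      hgg' i (Finset.mem_erase.1 hi).1]
  have hTg : ∀ c : Bool, T S g (Function.update b j c) =
      sSup ((fun v => max (A v + sg c * φ (f j v)) 0) '' S) := by
    intro c
    unfold T
    congr 1
    apply Set.image_congr'
    intro v
    rw [hsplit]
  have hTg' : ∀ c : Bool, T S g' (Function.update b j c) =
      sSup ((fun v => max (A v + sg c * (L * f j v)) 0) '' S) := by
    intro c
    unfold T
    congr 1
    apply Set.image_congr'
    intro v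
    rw [hsplit']
  rw [hTg, hTg, hTg', hTg']
  have hAbd : ∀ v ∈ S, |A v| ≤ (m : ℝ) * Cg := by
    intro v hv
    calc |A v| ≤ ∑ i ∈ Finset.univ.erase j, |sg (b i) * g i v| :=
      Finset.abs_sum_le_sum_abs _ _
    _ ≤ ∑ _i ∈ Finset.univ.erase j, Cg := by
      apply Finset.sum_le_sum
      intro i _
      rw [abs_mul, sg_abs, one_mul]
      exact hgbd i v hv
    _ = ((Finset.univ.erase j).card : ℝ) * Cg := by
      rw [Finset.sum_const, nsmul_eq_mul]
    _ ≤ (m : ℝ) * Cg := by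
      have hcard : (Finset.univ.erase j).card ≤ m := by
        have := Finset.card_le_card (Finset.subset_univ (Finset.univ.erase j))
        simpa using this
      have h2 : ((Finset.univ.erase j).card : ℝ) ≤ (m : ℝ) := by exact_mod_cast hcard
      nlinarith
  have key := one_coord ⟨v₀, hv₀⟩ A (f j) φ L hφ hφ0 ((m : ℝ) * Cg) Cf hAbd hfj
  have e1 : (fun v => max (A v + sg true * φ (f j v)) 0) =
      fun v => max (A v + φ (f j v)) 0 := by funext v; norm_num [sg]
  have e2 : (fun v => max (A v + sg false * φ (f j v)) 0) =
      fun v => max (A v - φ (f j v)) 0 := by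
    funext v; norm_num [sg, sub_eq_add_neg]
  have e3 : (fun v => max (A v + sg true * (L * f j v)) 0) =
      fun v => max (A v + L * f j v) 0 := by funext v; norm_num [sg]
  have e4 : (fun v => max (A v + sg false * (L * f j v)) 0) =
      fun v => max (A v - L * f j v) 0 := by
    funext v; norm_num [sg, sub_eq_add_neg]
  rw [e1, e2, e3, e4]
  exact key

lemma contraction_posPart (hS : S.Nonempty) (f : Fin m → V → ℝ) (φ : ℝ → ℝ) (L M : ℝ)
    (hL : 0 ≤ L)
    (hφ : ∀ x y : ℝ, |φ x - φ y| ≤ L * |x - y|) (hφ0 : φ 0 = 0)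
    (hM : ∀ i, ∀ v ∈ S, |f i v| ≤ M) :
    ∑ b, T S (fun i v => φ (f i v)) b ≤ ∑ b, T S (fun i v => L * f i v) b := by
  classical
  set mix : Finset (Fin m) → Fin m → V → ℝ :=
    fun J i => if i ∈ J then (fun v => L * f i v) else (fun v => φ (f i v)) with hmix
  have hbd : ∀ (J : Finset (Fin m)) (i), ∀ v ∈ S, |mix J i v| ≤ L * M := by
    intro J i v hv
    by_cases hi : i ∈ J
    · simp only [hmix, if_pos hi]
      rw [abs_mul, abs_of_nonneg hL]
      exact mul_le_mul_of_nonneg_left (hM i v hv) hL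
    · simp only [hmix, if_neg hi]
      have h1 : |φ (f i v)| ≤ L * |f i v| := by simpa [hφ0] using hφ (f i v) 0
      exact h1.trans (mul_le_mul_of_nonneg_left (hM i v hv) hL)
  have main : ∀ J : Finset (Fin m), ∑ b, T S (mix ∅) b ≤ ∑ b, T S (mix J) b := by
    intro J
    induction J using Finset.induction_on with
    | empty => exact le_refl _
    | @insert j J hj ih =>
      refine ih.trans ?_
      refine replace_coord hS f φ L M (L * M) hφ hφ0 j (mix J) (mix (insert j J))
        ?_ ?_ ?_ (hM j) (hbd J)
      · intro i hij
        simp only [hmix, Finset.mem_insert]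
        have : (i = j ∨ i ∈ J) ↔ i ∈ J := by
          constructor
          · rintro (rfl | h)
            · exact absurd rfl hij
            · exact h
          · exact Or.inr
        rw [if_congr this rfl rfl]
      · simp only [hmix, if_neg hj]
      · simp only [hmix, if_pos (Finset.mem_insert_self j J)]
  have h0 : mix ∅ = fun i v => φ (f i v) := by
    funext i
    simp [hmix]
  have h1 : mix Finset.univ = fun i v => L * f i v := by
    funext i
    simp [hmix]
  have := main Finset.univ
  rw [h0, h1] at this
  exact this

lemma contraction_abs (hS : S.Nonempty) (f : Fin m → V → ℝ) (φ : ℝ → ℝ) (L M : ℝ)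
    (hL : 0 ≤ L)
    (hφ : ∀ x y : ℝ, |φ x - φ y| ≤ L * |x - y|) (hφ0 : φ 0 = 0)
    (hM : ∀ i, ∀ v ∈ S, |f i v| ≤ M) :
    ∑ b : Fin m → Bool, sSup ((fun v => |∑ i, sg (b i) * φ (f i v)|) '' S) ≤
      2 * ∑ b : Fin m → Bool, sSup ((fun v => |∑ i, sg (b i) * (L * f i v)|) '' S) := by
  classical
  obtain ⟨v₀, hv₀⟩ := hS
  have hφbd : ∀ i, ∀ v ∈ S, |φ (f i v)| ≤ L * M := by
    intro i v hv
    have h1 : |φ (f i v)| ≤ L * |f i v| := by simpa [hφ0] using hφ (f i v) 0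
    exact h1.trans (mul_le_mul_of_nonneg_left (hM i v hv) hL)
  have hlinbd : ∀ i, ∀ v ∈ S, |L * f i v| ≤ L * M := by
    intro i v hv
    rw [abs_mul, abs_of_nonneg hL]
    exact mul_le_mul_of_nonneg_left (hM i v hv) hL
  set gφ : Fin m → V → ℝ := fun i v => φ (f i v) with hgφ
  set glin : Fin m → V → ℝ := fun i v => L * f i v with hglin
  have hbddφ : ∀ b : Fin m → Bool,
      BddAbove ((fun v => max (∑ i, sg (b i) * gφ i v) 0) '' S) := by
    intro b
    apply bddAbove_image_of_bound (C := max ((m : ℝ) * (L * M)) 0)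
    intro v hv
    exact max_le_max (le_trans (le_abs_self _) (abs_sum_sg_le gφ (L * M) hφbd b v hv)) le_rfl
  have hbddφa : ∀ b : Fin m → Bool,
      BddAbove ((fun v => |∑ i, sg (b i) * gφ i v|) '' S) := by
    intro b
    exact bddAbove_image_of_bound (C := (m : ℝ) * (L * M)) (abs_sum_sg_le gφ (L * M) hφbd b)
  have hbddla : ∀ b : Fin m → Bool,
      BddAbove ((fun v => |∑ i, sg (b i) * glin i v|) '' S) := by
    intro b
    exact bddAbove_image_of_bound (C := (m : ℝ) * (L * M)) (abs_sum_sg_le glin (L * M) hlinbd b)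
  -- step 1: abs sup ≤ two posPart sups
  have habs : ∀ b : Fin m → Bool,
      sSup ((fun v => |∑ i, sg (b i) * gφ i v|) '' S) ≤
        T S gφ b + T S gφ (fun i => !(b i)) := by
    intro b
    apply csSup_le (Set.Nonempty.image _ ⟨v₀, hv₀⟩)
    rintro _ ⟨v, hv, rfl⟩
    have hxabs : ∀ x : ℝ, |x| = max x 0 + max (-x) 0 := by
      intro x
      rcases le_total x 0 with h | h
      · rw [abs_of_nonpos h, max_eq_right h, max_eq_left (by linarith), zero_add]
      · rw [abs_of_nonneg h, max_eq_left h, max_eq_right (by linarith), add_zero]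
    show |∑ i, sg (b i) * gφ i v| ≤ _
    rw [hxabs]
    have hneg : -(∑ i, sg (b i) * gφ i v) = ∑ i, sg (!(b i)) * gφ i v := by
      rw [← Finset.sum_neg_distrib]
      apply Finset.sum_congr rfl
      intro i _
      rw [sg_not]
      ring
    rw [hneg]
    exact add_le_add (le_csSup (hbddφ b) ⟨v, hv, rfl⟩) (le_csSup (hbddφ _) ⟨v, hv, rfl⟩)
  -- step 2: reindex the flipped sum
  have hflipinv : Function.Involutive (fun b : Fin m → Bool => fun i => !(b i)) := by
    intro b
    funext i
    simp
  have hflip : ∑ b : Fin m → Bool, T S gφ (fun i => !(b i)) = ∑ b : Fin m → Bool, T S gφ b :=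
    Equiv.sum_comp (hflipinv.toPerm _) (T S gφ)
  -- step 3: posPart contraction
  have hcon : ∑ b : Fin m → Bool, T S gφ b ≤ ∑ b : Fin m → Bool, T S glin b :=
    contraction_posPart ⟨v₀, hv₀⟩ f φ L M hL hφ hφ0 hM
  -- step 4: posPart sup ≤ abs sup
  have hpa : ∀ b : Fin m → Bool,
      T S glin b ≤ sSup ((fun v => |∑ i, sg (b i) * glin i v|) '' S) := by
    intro b
    apply csSup_le (Set.Nonempty.image _ ⟨v₀, hv₀⟩)
    rintro _ ⟨v, hv, rfl⟩
    have h1 := le_csSup (hbddla b) ⟨v, hv, rfl⟩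
    exact max_le (le_trans (le_abs_self _) h1) (le_trans (abs_nonneg _) h1)
  calc ∑ b : Fin m → Bool, sSup ((fun v => |∑ i, sg (b i) * gφ i v|) '' S)
      ≤ ∑ b : Fin m → Bool, (T S gφ b + T S gφ (fun i => !(b i))) :=
        Finset.sum_le_sum fun b _ => habs b
  _ = ∑ b : Fin m → Bool, T S gφ b + ∑ b : Fin m → Bool, T S gφ (fun i => !(b i)) :=
        Finset.sum_add_distrib
  _ = 2 * ∑ b : Fin m → Bool, T S gφ b := by rw [hflip]; ring
  _ ≤ 2 * ∑ b : Fin m → Bool, T S glin b := by linarith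
  _ ≤ 2 * ∑ b : Fin m → Bool, sSup ((fun v => |∑ i, sg (b i) * glin i v|) '' S) := by
    have := Finset.sum_le_sum (fun b (_ : b ∈ Finset.univ) => hpa b)
    linarith

end Contraction2




/-- clip to `[-τ, τ]` -/
def clip (τ u : ℝ) : ℝ := max (min u τ) (-τ)

lemma phiTrunc_eq_clip_sq {τ : ℝ} (hτ : 0 ≤ τ) (u : ℝ) :
    phiTrunc τ u = (clip τ u) ^ 2 := by
  unfold phiTrunc clip
  rcases le_or_gt |u| τ with h | h
  · rw [if_pos h]
    have h1 := abs_le.1 h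
    rw [min_eq_left h1.2, max_eq_left h1.1]
  · rw [if_neg (not_le.2 h)]
    rcases le_or_gt u 0 with hu | hu
    · have h1 : u < -τ := by
        rw [abs_of_nonpos hu] at h
        linarith
      rw [min_eq_left (by linarith), max_eq_right (by linarith)]
      ring
    · have h1 : τ < u := by
        rw [abs_of_pos hu] at h
        linarith
      rw [min_eq_right (by linarith), max_eq_left (by linarith)]

lemma abs_clip_le {τ : ℝ} (hτ : 0 ≤ τ) (u : ℝ) : |clip τ u| ≤ τ := by
  unfold clip
  rw [abs_le]
  constructor
  · exact le_max_right _ _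
  · exact max_le (min_le_right _ _) (by linarith)

lemma clip_lip (τ : ℝ) (a b : ℝ) : |clip τ a - clip τ b| ≤ |a - b| := by
  unfold clip
  calc |max (min a τ) (-τ) - max (min b τ) (-τ)| ≤ |min a τ - min b τ| :=
    abs_max_sub_max_le_abs _ _ _
  _ ≤ |a - b| := abs_min_sub_min_le_max _ _ _ _ |>.trans (by simp)

lemma phiTrunc_lip {τ : ℝ} (hτ : 0 ≤ τ) (a b : ℝ) :
    |phiTrunc τ a - phiTrunc τ b| ≤ 2 * τ * |a - b| := by
  rw [phiTrunc_eq_clip_sq hτ, phiTrunc_eq_clip_sq hτ]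
  have h1 : clip τ a ^ 2 - clip τ b ^ 2 = (clip τ a - clip τ b) * (clip τ a + clip τ b) := by
    ring
  rw [h1, abs_mul]
  have h2 := clip_lip τ a b
  have h3 : |clip τ a + clip τ b| ≤ 2 * τ := by
    calc |clip τ a + clip τ b| ≤ |clip τ a| + |clip τ b| := abs_add_le _ _
    _ ≤ 2 * τ := by
      have := abs_clip_le hτ a
      have := abs_clip_le hτ b
      linarith
  have h4 : |clip τ a - clip τ b| * |clip τ a + clip τ b| ≤ |a - b| * (2 * τ) :=
    mul_le_mul h2 h3 (abs_nonneg _) (abs_nonneg _)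
  linarith [h4]

lemma phiTrunc_zero {τ : ℝ} (hτ : 0 ≤ τ) : phiTrunc τ 0 = 0 := by
  unfold phiTrunc
  rw [if_pos (by simpa using hτ)]
  norm_num

lemma phiTrunc_nonneg {τ : ℝ} (hτ : 0 ≤ τ) (u : ℝ) : 0 ≤ phiTrunc τ u := by
  rw [phiTrunc_eq_clip_sq hτ]
  positivity

lemma phiTrunc_le {τ : ℝ} (hτ : 0 ≤ τ) (u : ℝ) : phiTrunc τ u ≤ τ ^ 2 := by
  rw [phiTrunc_eq_clip_sq hτ]
  have h := abs_le.1 (abs_clip_le hτ u)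
  exact sq_le_sq' h.1 h.2

lemma continuous_phiTrunc {τ : ℝ} (hτ : 0 ≤ τ) : Continuous (phiTrunc τ) := by
  have : phiTrunc τ = fun u => (clip τ u) ^ 2 := funext (phiTrunc_eq_clip_sq hτ)
  rw [this]
  unfold clip
  fun_prop

lemma continuous_dotp_right {n : ℕ} (x : Fin n → ℝ) : Continuous (fun v : Fin n → ℝ => dotp x v) := by
  unfold dotp
  fun_prop

lemma continuous_dotp_left {n : ℕ} (v : Fin n → ℝ) :
    Continuous (fun x : Fin n → ℝ => dotp x v) := by
  unfold dotp
  fun_prop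

-- Cauchy-Schwarz for dotp
lemma abs_dotp_le {n : ℕ} (x y : Fin n → ℝ) : |dotp x y| ≤ euclNorm x * euclNorm y := by
  unfold dotp euclNorm euclNormSq
  have h1 : (∑ i, x i * y i) ^ 2 ≤ (∑ i, x i ^ 2) * (∑ i, y i ^ 2) := by
    exact Finset.sum_mul_sq_le_sq_mul_sq Finset.univ x y
  have h2 : 0 ≤ (∑ i, x i ^ 2) := Finset.sum_nonneg fun i _ => sq_nonneg _
  have h3 : 0 ≤ (∑ i, y i ^ 2) := Finset.sum_nonneg fun i _ => sq_nonneg _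
  have h4 : Real.sqrt ((∑ i, x i * y i) ^ 2) ≤
      Real.sqrt ((∑ i, x i ^ 2) * (∑ i, y i ^ 2)) := Real.sqrt_le_sqrt h1
  rwa [Real.sqrt_sq_eq_abs, Real.sqrt_mul h2] at h4

-- sup representation
lemma biSup_eq_csSup {V : Type*} [Nonempty V] (S : Set V) (hS : S.Nonempty) (g : V → ℝ)
    (hg0 : ∀ v, 0 ≤ g v) (C : ℝ) (hgC : ∀ v, g v ≤ C) :
    (⨆ v ∈ S, g v) = sSup (g '' S) := by
  have hbdd : BddAbove (g '' S) := by
    refine ⟨C, ?_⟩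
    rintro _ ⟨v, hv, rfl⟩
    exact hgC v
  have hC0 : 0 ≤ C := le_trans (hg0 hS.choose) (hgC hS.choose)
  apply le_antisymm
  · apply ciSup_le
    intro v
    by_cases hv : v ∈ S
    · have : (⨆ _ : v ∈ S, g v) = g v := by
        rw [ciSup_pos hv]
      rw [this]
      exact le_csSup hbdd ⟨v, hv, rfl⟩
    · have : (⨆ _ : v ∈ S, g v) = 0 := by
        simp [hv]
      rw [this]
      obtain ⟨w, hw⟩ := hS
      exact le_trans (hg0 w) (le_csSup hbdd ⟨w, hw, rfl⟩)
  · apply csSup_le (Set.Nonempty.image _ hS)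
    rintro _ ⟨v, hv, rfl⟩
    have h1 : g v ≤ ⨆ _ : v ∈ S, g v := by
      rw [ciSup_pos hv]
    refine h1.trans ?_
    have hbdd' : BddAbove (Set.range fun v => ⨆ _ : v ∈ S, g v) := by
      refine ⟨max C 0, ?_⟩
      rintro _ ⟨v', rfl⟩
      by_cases hv' : v' ∈ S
      · calc (⨆ _ : v' ∈ S, g v') = g v' := ciSup_pos hv'
        _ ≤ max C 0 := le_max_of_le_left (hgC v')
      · calc (⨆ _ : v' ∈ S, g v') = 0 := by simp [hv']
        _ ≤ max C 0 := le_max_right _ _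
    exact le_ciSup hbdd' v

lemma csSup_image_dense {V : Type*} [TopologicalSpace V] {D S : Set V}
    (hDS : D ⊆ S) (hSD : S ⊆ closure D) (hS : S.Nonempty) (g : V → ℝ)
    (hg : Continuous g) (C : ℝ) (hgC : ∀ v, g v ≤ C) :
    sSup (g '' S) = sSup (g '' D) := by
  have hD : D.Nonempty := by
    obtain ⟨v, hv⟩ := hS
    by_contra h
    rw [Set.not_nonempty_iff_eq_empty] at h
    subst h
    simp at hSD
    rw [hSD] at hv
    exact hv
  have hbddD : BddAbove (g '' D) := by
    refine ⟨C, ?_⟩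
    rintro _ ⟨v, hv, rfl⟩
    exact hgC v
  have hbddS : BddAbove (g '' S) := by
    refine ⟨C, ?_⟩
    rintro _ ⟨v, hv, rfl⟩
    exact hgC v
  apply le_antisymm
  · apply csSup_le (Set.Nonempty.image _ hS)
    rintro _ ⟨v, hv, rfl⟩
    have hclosed : IsClosed {w : V | g w ≤ sSup (g '' D)} :=
      isClosed_le hg continuous_const
    have hsub : D ⊆ {w : V | g w ≤ sSup (g '' D)} := by
      intro w hw
      exact le_csSup hbddD ⟨w, hw, rfl⟩
    have := closure_minimal hsub hclosed
    exact this (hSD hv)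
  · exact csSup_le_csSup hbddS (Set.Nonempty.image _ hD) (Set.image_mono hDS)

lemma csSup_image_countable_eq_iSup {V : Type*} {D : Set V} (e : ℕ → V)
    (hD : D = Set.range e) (g : V → ℝ) :
    sSup (g '' D) = ⨆ j : ℕ, g (e j) := by
  rw [hD, ← Set.range_comp]
  rfl




lemma euclNormSq_nonneg {n : ℕ} (x : Fin n → ℝ) : 0 ≤ euclNormSq x :=
  Finset.sum_nonneg fun i _ => sq_nonneg _

lemma euclNorm_nonneg {n : ℕ} (x : Fin n → ℝ) : 0 ≤ euclNorm x := Real.sqrt_nonneg _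

lemma euclNorm_sq {n : ℕ} (x : Fin n → ℝ) : euclNorm x ^ 2 = euclNormSq x :=
  Real.sq_sqrt (euclNormSq_nonneg x)

variable {n k : ℕ} {U : Matrix (Fin n) (Fin (2 * k)) ℝ}

lemma Uorth (hU : U.transpose * U = 1) (j j' : Fin (2 * k)) :
    ∑ p, U p j * U p j' = if j = j' then 1 else 0 := by
  have := congrFun (congrFun hU j) j'
  rw [Matrix.mul_apply] at this
  simp only [Matrix.transpose_apply] at this
  rw [this, Matrix.one_apply]

lemma euclNormSq_mulVec (hU : U.transpose * U = 1) (z : Fin (2 * k) → ℝ) :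
    euclNormSq (U.mulVec z) = euclNormSq z := by
  unfold euclNormSq
  have h1 : ∀ p, (U.mulVec z p) ^ 2 = ∑ j, ∑ j', (z j * z j') * (U p j * U p j') := by
    intro p
    rw [Matrix.mulVec, dotProduct]
    rw [pow_two, Finset.sum_mul_sum]
    apply Finset.sum_congr rfl
    intro j _
    apply Finset.sum_congr rfl
    intro j' _
    ring
  rw [Finset.sum_congr rfl fun p _ => h1 p]
  rw [Finset.sum_comm]
  have h2 : ∀ j, ∑ p, ∑ j', (z j * z j') * (U p j * U p j') = z j ^ 2 := by
    intro j
    rw [Finset.sum_comm]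
    have h3 : ∀ j', ∑ p, (z j * z j') * (U p j * U p j') =
        (z j * z j') * (if j = j' then (1:ℝ) else 0) := by
      intro j'
      rw [← Finset.mul_sum, Uorth hU]
    rw [Finset.sum_congr rfl fun j' _ => h3 j']
    have h4 : ∀ j' : Fin (2 * k), (z j * z j') * (if j = j' then (1:ℝ) else 0) =
        if j = j' then z j * z j' else 0 := by
      intro j'
      by_cases hjj : j = j' <;> simp [hjj]
    rw [Finset.sum_congr rfl fun j' _ => h4 j']
    rw [Finset.sum_ite_eq Finset.univ j fun j' => z j * z j']
    rw [if_pos (Finset.mem_univ j)]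
    ring
  rw [Finset.sum_congr rfl fun j _ => h2 j]

lemma dotp_mulVec {c : Fin n → ℝ} (z : Fin (2 * k) → ℝ) :
    dotp c (U.mulVec z) = dotp (fun j => ∑ p, c p * U p j) z := by
  unfold dotp
  simp only [Matrix.mulVec, dotProduct]
  have h1 : ∀ p, c p * (∑ j, U p j * z j) = ∑ j, (c p * U p j) * z j := by
    intro p
    rw [Finset.mul_sum]
    apply Finset.sum_congr rfl
    intro j _
    ring
  rw [Finset.sum_congr rfl fun p _ => h1 p, Finset.sum_comm]
  apply Finset.sum_congr rfl
  intro j _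
  rw [Finset.sum_mul]

lemma abs_dotp_le' {x y : Fin n → ℝ} : |dotp x y| ≤ euclNorm x * euclNorm y := by
  unfold dotp euclNorm euclNormSq
  have h1 : (∑ i, x i * y i) ^ 2 ≤ (∑ i, x i ^ 2) * (∑ i, y i ^ 2) :=
    Finset.sum_mul_sq_le_sq_mul_sq Finset.univ x y
  have h2 : 0 ≤ (∑ i, x i ^ 2) := Finset.sum_nonneg fun i _ => sq_nonneg _
  have h4 : Real.sqrt ((∑ i, x i * y i) ^ 2) ≤
      Real.sqrt ((∑ i, x i ^ 2) * (∑ i, y i ^ 2)) := Real.sqrt_le_sqrt h1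
  rwa [Real.sqrt_sq_eq_abs, Real.sqrt_mul h2] at h4

lemma dotp_bound_on_S (hU : U.transpose * U = 1) (c v : Fin n → ℝ)
    (hv : (∃ z, v = U.mulVec z) ∧ euclNorm v = 1) :
    |dotp c v| ≤ euclNorm (fun j => ∑ p, c p * U p j) := by
  obtain ⟨⟨z, rfl⟩, hnorm⟩ := hv
  rw [dotp_mulVec]
  have hz : euclNorm z = 1 := by
    unfold euclNorm at hnorm ⊢
    rw [← euclNormSq_mulVec hU]
    exact hnorm
  calc |dotp (fun j => ∑ p, c p * U p j) z|
      ≤ euclNorm (fun j => ∑ p, c p * U p j) * euclNorm z := abs_dotp_le'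
  _ = euclNorm (fun j => ∑ p, c p * U p j) := by rw [hz, mul_one]

lemma dotp_bound_norm (x v : Fin n → ℝ) (hv : euclNorm v = 1) :
    |dotp x v| ≤ euclNorm x := by
  calc |dotp x v| ≤ euclNorm x * euclNorm v := abs_dotp_le'
  _ = euclNorm x := by rw [hv, mul_one]

lemma dotp_sum_left {m : ℕ} (g : Fin m → Fin n → ℝ) (v : Fin n → ℝ) :
    dotp (fun p => ∑ i, g i p) v = ∑ i, dotp (g i) v := by
  unfold dotp
  rw [Finset.sum_comm]
  apply Finset.sum_congr rfl
  intro p _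
  rw [Finset.sum_mul]

lemma dotp_sq_expand (x u : Fin n → ℝ) :
    (dotp x u) ^ 2 = ∑ p, ∑ q, (u p * u q) * (x p * x q) := by
  unfold dotp
  rw [pow_two, Finset.sum_mul_sum]
  apply Finset.sum_congr rfl
  intro p _
  apply Finset.sum_congr rfl
  intro q _
  ring



section Prob
variable {Ω : Type*} [MeasurableSpace Ω] {μ : Measure Ω} [IsProbabilityMeasure μ]

lemma integrable_of_bounded {f : Ω → ℝ} (hf : AEStronglyMeasurable f μ) (C : ℝ)
    (h : ∀ ω, |f ω| ≤ C) : Integrable f μ := by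
  refine Integrable.mono' (integrable_const C) hf ?_
  filter_upwards with ω
  exact (abs_norm (f ω)) ▸ (by simpa using h ω)

lemma integral_sqrt_le {f : Ω → ℝ} (hf : Integrable f μ) (hf0 : ∀ ω, 0 ≤ f ω) :
    ∫ ω, Real.sqrt (f ω) ∂μ ≤ Real.sqrt (∫ ω, f ω ∂μ) := by
  have hsm : AEStronglyMeasurable (fun ω => Real.sqrt (f ω)) μ :=
    Real.continuous_sqrt.comp_aestronglyMeasurable hf.aestronglyMeasurable
  have hsint : Integrable (fun ω => Real.sqrt (f ω)) μ := by
    refine Integrable.mono' (g := fun ω => f ω + 1) (hf.add (integrable_const 1)) hsm ?_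
    filter_upwards with ω
    have h0 := hf0 ω
    rw [Real.norm_eq_abs, abs_of_nonneg (Real.sqrt_nonneg _)]
    rcases le_total (f ω) 1 with h | h
    · calc Real.sqrt (f ω) ≤ Real.sqrt 1 := Real.sqrt_le_sqrt h
      _ = 1 := Real.sqrt_one
      _ ≤ f ω + 1 := by linarith
    · have h2 : f ω ≤ f ω ^ 2 := by nlinarith
      calc Real.sqrt (f ω) ≤ Real.sqrt (f ω ^ 2) := Real.sqrt_le_sqrt h2
      _ = f ω := Real.sqrt_sq h0
      _ ≤ f ω + 1 := by linarith
  set c := ∫ ω, Real.sqrt (f ω) ∂μ with hc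
  have hc0 : 0 ≤ c := integral_nonneg fun ω => Real.sqrt_nonneg _
  have hkey : 0 ≤ ∫ ω, (Real.sqrt (f ω) - c) ^ 2 ∂μ :=
    integral_nonneg fun ω => sq_nonneg _
  have hexp : ∫ ω, (Real.sqrt (f ω) - c) ^ 2 ∂μ = (∫ ω, f ω ∂μ) - c ^ 2 := by
    have hsq : ∀ ω, (Real.sqrt (f ω) - c) ^ 2 = f ω - (2 * c) * Real.sqrt (f ω) + c ^ 2 := by
      intro ω
      have : Real.sqrt (f ω) ^ 2 = f ω := Real.sq_sqrt (hf0 ω)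
      nlinarith [this]
    rw [integral_congr_ae (Filter.Eventually.of_forall hsq)]
    have e1 : ∫ ω, (f ω - 2 * c * Real.sqrt (f ω) + c ^ 2) ∂μ =
        (∫ ω, (f ω - 2 * c * Real.sqrt (f ω)) ∂μ) + ∫ _ω, (c ^ 2 : ℝ) ∂μ :=
      integral_add (hf.sub (hsint.const_mul (2 * c))) (integrable_const _)
    have e2 : ∫ ω, (f ω - 2 * c * Real.sqrt (f ω)) ∂μ =
        (∫ ω, f ω ∂μ) - ∫ ω, 2 * c * Real.sqrt (f ω) ∂μ :=
      integral_sub hf (hsint.const_mul (2 * c))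
    have e3 : ∫ ω, 2 * c * Real.sqrt (f ω) ∂μ = 2 * c * c := by
      rw [integral_const_mul, ← hc]
    rw [e1, e2, e3, integral_const]
    simp
    ring
  rw [hexp] at hkey
  have : c ^ 2 ≤ ∫ ω, f ω ∂μ := by linarith
  calc c = Real.sqrt (c ^ 2) := by rw [Real.sqrt_sq hc0]
  _ ≤ Real.sqrt (∫ ω, f ω ∂μ) := Real.sqrt_le_sqrt this

variable {m : ℕ}

lemma sum_sg_mul_sg (i i' : Fin m) :
    ∑ b : Fin m → Bool, sg (b i) * sg (b i') = if i = i' then (2 ^ m : ℝ) else 0 := by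
  classical
  rcases eq_or_ne i i' with rfl | h
  · rw [if_pos rfl]
    have : ∀ b : Fin m → Bool, sg (b i) * sg (b i) = 1 := by
      intro b; cases b i <;> norm_num [sg]
    rw [Finset.sum_congr rfl fun b _ => this b, Finset.sum_const]
    rw [Finset.card_univ]
    have hcard : Fintype.card (Fin m → Bool) = 2 ^ m := by
      rw [Fintype.card_fun]
      simp
    rw [hcard]
    simp
  · rw [if_neg h]
    apply Finset.sum_ninvolution (fun b => Function.update b i (!(b i)))
    · intro b
      rw [Function.update_self, Function.update_of_ne (Ne.symm h), sg_not]
      ring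
    · intro b _
      intro heq
      have := congrFun heq i
      rw [Function.update_self] at this
      cases hbi : b i <;> rw [hbi] at this <;> simp at this
    · intro b
      exact Finset.mem_univ _
    · intro b
      funext x
      rcases eq_or_ne x i with rfl | hx
      · simp
      · simp [Function.update_of_ne hx]

lemma sum_sq_signs (d : Fin m → ℝ) :
    ∑ b : Fin m → Bool, (∑ i, sg (b i) * d i) ^ 2 = 2 ^ m * ∑ i, d i ^ 2 := by
  classical
  have hexp : ∀ b : Fin m → Bool, (∑ i, sg (b i) * d i) ^ 2 =
      ∑ i, ∑ i', (sg (b i) * sg (b i')) * (d i * d i') := by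
    intro b
    rw [pow_two, Finset.sum_mul_sum]
    apply Finset.sum_congr rfl
    intro i _
    apply Finset.sum_congr rfl
    intro i' _
    ring
  rw [Finset.sum_congr rfl fun b _ => hexp b]
  rw [Finset.sum_comm]
  have : ∀ i : Fin m, ∑ b : Fin m → Bool, ∑ i', (sg (b i) * sg (b i')) * (d i * d i') =
      2 ^ m * d i ^ 2 := by
    intro i
    rw [Finset.sum_comm]
    have hinner : ∀ i' : Fin m, ∑ b : Fin m → Bool, (sg (b i) * sg (b i')) * (d i * d i') =
        (if i = i' then (2 ^ m : ℝ) else 0) * (d i * d i') := by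
      intro i'
      rw [← Finset.sum_mul]
      rw [sum_sg_mul_sg]
    rw [Finset.sum_congr rfl fun i' _ => hinner i']
    have h2 : ∀ i' : Fin m, (if i = i' then (2 ^ m : ℝ) else 0) * (d i * d i') =
        if i = i' then (2 ^ m : ℝ) * (d i * d i') else 0 := by
      intro i'
      by_cases hii : i = i' <;> simp [hii]
    rw [Finset.sum_congr rfl fun i' _ => h2 i']
    rw [Finset.sum_ite_eq Finset.univ i (fun i' => (2 ^ m : ℝ) * (d i * d i'))]
    rw [if_pos (Finset.mem_univ i)]
    ring
  rw [Finset.sum_congr rfl fun i _ => this i, ← Finset.mul_sum]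

lemma avg_le_sqrt_avg (N : (Fin m → Bool) → ℝ) (hN : ∀ b, 0 ≤ N b) :
    (1 / 2) ^ m * ∑ b : Fin m → Bool, N b ≤
      Real.sqrt ((1 / 2 : ℝ) ^ m * ∑ b : Fin m → Bool, (N b) ^ 2) := by
  have hcs : (∑ b : Fin m → Bool, N b) ^ 2 ≤
      (2 ^ m : ℝ) * ∑ b : Fin m → Bool, (N b) ^ 2 := by
    have := Finset.sum_mul_sq_le_sq_mul_sq Finset.univ (fun _ : Fin m → Bool => (1 : ℝ)) N
    simpa [Fintype.card_fun, Finset.card_univ] using this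
  have h2m : (0 : ℝ) < (1 / 2 : ℝ) ^ m := by positivity
  have hnn : (0:ℝ) ≤ (1 / 2 : ℝ) ^ m * ∑ b : Fin m → Bool, N b ^ 2 := by
    have : (0:ℝ) ≤ ∑ b : Fin m → Bool, N b ^ 2 := Finset.sum_nonneg fun b _ => sq_nonneg _
    positivity
  have hlhsnn : (0:ℝ) ≤ (1 / 2 : ℝ) ^ m * ∑ b : Fin m → Bool, N b := by
    have : (0:ℝ) ≤ ∑ b : Fin m → Bool, N b := Finset.sum_nonneg fun b _ => hN b
    positivity
  apply Real.le_sqrt_of_sq_le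
  have hpow : ((1 / 2 : ℝ) ^ m) * ((1 / 2 : ℝ) ^ m) * (2 ^ m : ℝ) = (1 / 2 : ℝ) ^ m := by
    rw [← mul_pow, ← mul_pow]
    norm_num
  calc ((1 / 2 : ℝ) ^ m * ∑ b : Fin m → Bool, N b) ^ 2
      = ((1 / 2 : ℝ) ^ m) * ((1 / 2 : ℝ) ^ m) * (∑ b : Fin m → Bool, N b) ^ 2 := by ring
  _ ≤ ((1 / 2 : ℝ) ^ m) * ((1 / 2 : ℝ) ^ m) * ((2 ^ m : ℝ) * ∑ b : Fin m → Bool, (N b) ^ 2) := by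
    have h0 : (0 : ℝ) ≤ ((1 / 2 : ℝ) ^ m) * ((1 / 2 : ℝ) ^ m) := by positivity
    nlinarith [hcs]
  _ = (1 / 2 : ℝ) ^ m * ∑ b : Fin m → Bool, (N b) ^ 2 := by
    rw [← mul_assoc, hpow]



lemma dotp_smul_left {n : ℕ} (c : ℝ) (x v : Fin n → ℝ) :
    dotp (fun p => c * x p) v = c * dotp x v := by
  unfold dotp
  rw [Finset.mul_sum]
  apply Finset.sum_congr rfl
  intro p _
  ring

lemma integrable_sqrt {f : Ω → ℝ} (hf : Integrable f μ) (hf0 : ∀ ω, 0 ≤ f ω) :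
    Integrable (fun ω => Real.sqrt (f ω)) μ := by
  have hsm : AEStronglyMeasurable (fun ω => Real.sqrt (f ω)) μ :=
    Real.continuous_sqrt.comp_aestronglyMeasurable hf.aestronglyMeasurable
  refine Integrable.mono' (g := fun ω => f ω + 1) (hf.add (integrable_const 1)) hsm ?_
  filter_upwards with ω
  have h0 := hf0 ω
  rw [Real.norm_eq_abs, abs_of_nonneg (Real.sqrt_nonneg _)]
  rcases le_total (f ω) 1 with h | h
  · calc Real.sqrt (f ω) ≤ Real.sqrt 1 := Real.sqrt_le_sqrt h
    _ = 1 := Real.sqrt_one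
    _ ≤ f ω + 1 := by linarith
  · have h2 : f ω ≤ f ω ^ 2 := by nlinarith
    calc Real.sqrt (f ω) ≤ Real.sqrt (f ω ^ 2) := Real.sqrt_le_sqrt h2
    _ = f ω := Real.sqrt_sq h0
    _ ≤ f ω + 1 := by linarith

end Prob
end RPTQB

open RPTQB

/-- For `U ∈ ℝ^{n×2k}` with orthonormal columns,
`S = {Uz : ‖Uz‖ = 1}`, `τ > 0`, i.i.d. copies `a₁,…,a_m` of an isotropic random vector and
i.i.d. Rademacher signs `ε₁,…,ε_m` independent of the `a_i`:
`E[sup_{v ∈ S} |(1/m) ∑ᵢ εᵢ φ_τ(⟨aᵢ, v⟩)|] ≤ 4τ√(2k/m)`. -/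
theorem rademacher_process_truncated_quadratic_bound
    {Ω : Type*} [MeasurableSpace Ω] (μ : Measure Ω) [IsProbabilityMeasure μ]
    {n k m : ℕ} (τ : ℝ) (hτ : 0 < τ)
    (U : Matrix (Fin n) (Fin (2 * k)) ℝ) (hU : U.transpose * U = 1)
    (a : Fin m → Ω → Fin n → ℝ) (a₀ : Ω → Fin n → ℝ) (ε : Fin m → Ω → ℝ)
    (hameas : ∀ i, Measurable (a i)) (hemeas : ∀ i, Measurable (ε i))
    (haindep : iIndepFun a μ)
    (haid : ∀ i, IdentDistrib (a i) a₀ μ μ)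
    (hiso : IsIsotropic μ a₀)
    (heindep : iIndepFun ε μ)
    (herad : ∀ i, μ {ω | ε i ω = 1} = 1/2 ∧ μ {ω | ε i ω = -1} = 1/2)
    (hae : IndepFun (fun ω i => a i ω) (fun ω i => ε i ω) μ) :
    ∫ ω, (⨆ v ∈ {v : Fin n → ℝ | (∃ z, v = U.mulVec z) ∧ euclNorm v = 1},
        |(1 / (m : ℝ)) * ∑ i, ε i ω * phiTrunc τ (dotp (a i ω) v)|) ∂μ ≤
      4 * τ * Real.sqrt (2 * (k : ℝ) / (m : ℝ)) := by
  classical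
  have hτ0 : (0:ℝ) ≤ τ := hτ.le
  set S : Set (Fin n → ℝ) := {v : Fin n → ℝ | (∃ z, v = U.mulVec z) ∧ euclNorm v = 1}
    with hSdef
  have hRHS0 : 0 ≤ 4 * τ * Real.sqrt (2 * (k:ℝ) / (m:ℝ)) := by positivity
  rcases Set.eq_empty_or_nonempty S with hSe | hSne
  · -- empty index set: the supremum is identically 0
    have hzero : ∀ ω : Ω,
        (⨆ v ∈ S, |(1 / (m : ℝ)) * ∑ i, ε i ω * phiTrunc τ (dotp (a i ω) v)|) = 0 := by
      intro ω
      have h1 : ∀ v : Fin n → ℝ,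
          (⨆ _ : v ∈ S, |(1 / (m : ℝ)) * ∑ i, ε i ω * phiTrunc τ (dotp (a i ω) v)|) = 0 := by
        intro v
        have hv : v ∉ S := by rw [hSe]; exact Set.notMem_empty v
        haveI : IsEmpty (v ∈ S) := ⟨fun h => hv h⟩
        exact Real.iSup_of_isEmpty _
      calc (⨆ v ∈ S, |(1 / (m : ℝ)) * ∑ i, ε i ω * phiTrunc τ (dotp (a i ω) v)|)
          = ⨆ _v : Fin n → ℝ, (0:ℝ) := iSup_congr h1
      _ = 0 := ciSup_const
    have heq : (fun ω : Ω =>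
        ⨆ v ∈ S, |(1 / (m : ℝ)) * ∑ i, ε i ω * phiTrunc τ (dotp (a i ω) v)|) =
        fun _ => (0:ℝ) := funext hzero
    rw [heq, integral_zero]
    exact hRHS0
  · obtain ⟨v₀, hv₀S⟩ := hSne
    -- countable dense subset of S
    obtain ⟨D, hDS, hDc, hSD⟩ :=
      (TopologicalSpace.IsSeparable.of_separableSpace S).exists_countable_dense_subset
    have hDne : D.Nonempty := by
      by_contra h
      rw [Set.not_nonempty_iff_eq_empty] at h
      subst h
      simp only [closure_empty] at hSD
      exact absurd (hSD hv₀S) (Set.notMem_empty v₀)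
    obtain ⟨e, hDe⟩ := Set.Countable.exists_eq_range hDc hDne
    -- the countable-sup version of the empirical process
    set G : (Fin m → Fin n → ℝ) → (Fin m → ℝ) → ℝ :=
      fun x s => ⨆ j : ℕ, |(1 / (m:ℝ)) * ∑ i, s i * phiTrunc τ (dotp (x i) (e j))| with hGdef
    have hterm_bd : ∀ (x : Fin m → Fin n → ℝ) (s : Fin m → ℝ) (v : Fin n → ℝ),
        |(1 / (m:ℝ)) * ∑ i, s i * phiTrunc τ (dotp (x i) v)| ≤
          (1/(m:ℝ)) * ∑ i, |s i| * τ^2 := by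
      intro x s v
      rw [abs_mul, abs_of_nonneg (by positivity : (0:ℝ) ≤ 1 / (m:ℝ))]
      apply mul_le_mul_of_nonneg_left _ (by positivity : (0:ℝ) ≤ 1 / (m:ℝ))
      calc |∑ i, s i * phiTrunc τ (dotp (x i) v)|
          ≤ ∑ i, |s i * phiTrunc τ (dotp (x i) v)| := Finset.abs_sum_le_sum_abs _ _
      _ ≤ ∑ i, |s i| * τ^2 := by
        apply Finset.sum_le_sum
        intro i _
        rw [abs_mul, abs_of_nonneg (phiTrunc_nonneg hτ0 _)]
        exact mul_le_mul_of_nonneg_left (phiTrunc_le hτ0 _) (abs_nonneg _)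
    have hGcont : ∀ (x : Fin m → Fin n → ℝ) (s : Fin m → ℝ),
        Continuous (fun v : Fin n → ℝ =>
          |(1/(m:ℝ)) * ∑ i, s i * phiTrunc τ (dotp (x i) v)|) := by
      intro x s
      apply Continuous.abs
      apply Continuous.mul continuous_const
      apply continuous_finset_sum
      intro i _
      exact Continuous.mul continuous_const
        ((continuous_phiTrunc hτ0).comp (continuous_dotp_right (x i)))
    have hGeq : ∀ (x : Fin m → Fin n → ℝ) (s : Fin m → ℝ),
        (⨆ v ∈ S, |(1/(m:ℝ)) * ∑ i, s i * phiTrunc τ (dotp (x i) v)|) = G x s := by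
      intro x s
      rw [biSup_eq_csSup S ⟨v₀, hv₀S⟩ _ (fun v => abs_nonneg _) _ (hterm_bd x s)]
      rw [csSup_image_dense hDS hSD ⟨v₀, hv₀S⟩ _ (hGcont x s) _ (hterm_bd x s)]
      exact csSup_image_countable_eq_iSup e hDe _
    -- bounds on G at sign vectors
    have hsgabs : ∀ (b : Fin m → Bool) (i : Fin m), |sg (b i)| = 1 := fun b i => sg_abs _
    have hGsgbd : ∀ (x : Fin m → Fin n → ℝ) (b : Fin m → Bool) (j : ℕ),
        |(1 / (m:ℝ)) * ∑ i, sg (b i) * phiTrunc τ (dotp (x i) (e j))| ≤ τ^2 := by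
      intro x b j
      refine (hterm_bd x (fun i => sg (b i)) (e j)).trans ?_
      have h1 : ∑ i : Fin m, |sg (b i)| * τ^2 = (m:ℝ) * τ^2 := by
        rw [Finset.sum_congr rfl fun i _ => by rw [hsgabs b i, one_mul]]
        rw [Finset.sum_const, Finset.card_univ, Fintype.card_fin, nsmul_eq_mul]
      rw [h1]
      rcases Nat.eq_zero_or_pos m with hm | hm
      · subst hm
        simp only [Nat.cast_zero, div_zero, zero_mul]
        positivity
      · have : (1/(m:ℝ)) * ((m:ℝ) * τ^2) = τ^2 := by
          field_simp
        rw [this]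
    have hGbdd : ∀ (x : Fin m → Fin n → ℝ) (b : Fin m → Bool),
        BddAbove (Set.range fun j : ℕ =>
          |(1 / (m:ℝ)) * ∑ i, sg (b i) * phiTrunc τ (dotp (x i) (e j))|) := by
      intro x b
      refine ⟨τ^2, ?_⟩
      rintro _ ⟨j, rfl⟩
      exact hGsgbd x b j
    have hG0 : ∀ (x : Fin m → Fin n → ℝ) (b : Fin m → Bool),
        0 ≤ G x (fun i => sg (b i)) :=
      fun x b => le_trans (abs_nonneg _) (le_ciSup (hGbdd x b) 0)
    have hGle : ∀ (x : Fin m → Fin n → ℝ) (b : Fin m → Bool),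
        G x (fun i => sg (b i)) ≤ τ^2 :=
      fun x b => ciSup_le fun j => hGsgbd x b j
    -- measurability of G in x
    have hGmeas : ∀ s : Fin m → ℝ, Measurable (fun x : Fin m → Fin n → ℝ => G x s) := by
      intro s
      apply Measurable.iSup
      intro j
      apply Continuous.measurable
      apply Continuous.abs
      apply Continuous.mul continuous_const
      apply continuous_finset_sum
      intro i _
      refine Continuous.mul continuous_const ?_
      exact (continuous_phiTrunc hτ0).comp
        ((continuous_dotp_left (e j)).comp (continuous_apply i))
    -- random vectors
    set A : Ω → Fin m → Fin n → ℝ := fun ω i => a i ω with hAdef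
    set E : Ω → Fin m → ℝ := fun ω i => ε i ω with hEdef
    have hAmeas : Measurable A := measurable_pi_lambda _ fun i => hameas i
    have hEmeas : Measurable E := measurable_pi_lambda _ fun i => hemeas i
    set F : (Fin m → Bool) → Ω → ℝ := fun b ω => G (A ω) (fun i => sg (b i)) with hFdef
    have hFmeas : ∀ b, Measurable (F b) := fun b => (hGmeas _).comp hAmeas
    have hFbd : ∀ b ω, |F b ω| ≤ τ^2 := by
      intro b ω
      rw [abs_of_nonneg (hG0 (A ω) b)]
      exact hGle (A ω) b
    have hFint : ∀ b, Integrable (F b) μ := fun b =>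
      integrable_of_bounded (hFmeas b).aestronglyMeasurable (τ^2) (hFbd b)
    -- the sign-pattern sets
    set s₀ : (Fin m → Bool) → (Fin m → ℝ) := fun b i => sg (b i) with hs₀def
    have hs₀inj : ∀ b b' : Fin m → Bool, s₀ b = s₀ b' → b = b' := by
      intro b b' h
      funext i
      have := congrFun h i
      cases hb : b i <;> cases hb' : b' i <;>
        rw [hs₀def] at this <;> simp only [hb, hb', sg] at this <;> first | rfl | norm_num at this
    set Ωb : (Fin m → Bool) → Set Ω := fun b => E ⁻¹' {s₀ b} with hΩbdef
    have hΩbmeas : ∀ b, MeasurableSet (Ωb b) := fun b => hEmeas (measurableSet_singleton _)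
    have hμΩb : ∀ b, μ (Ωb b) = (1/2 : ENNReal) ^ m := by
      intro b
      have h1 : Ωb b = ⋂ i, (ε i) ⁻¹' {sg (b i)} := by
        ext ω
        simp only [hΩbdef, Set.mem_preimage, Set.mem_singleton_iff, Set.mem_iInter, hs₀def,
          hEdef]
        constructor
        · intro h i
          exact congrFun h i
        · intro h
          funext i
          exact h i
      rw [h1]
      rw [heindep.meas_iInter (fun i => ⟨{sg (b i)}, measurableSet_singleton _, rfl⟩)]
      have h2 : ∀ i, μ ((ε i) ⁻¹' {sg (b i)}) = 1/2 := by
        intro i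
        cases hbi : b i
        · have : (ε i) ⁻¹' {sg false} = {ω | ε i ω = -1} := by
            ext ω; simp [sg]
          rw [this]
          exact (herad i).2
        · have : (ε i) ⁻¹' {sg true} = {ω | ε i ω = 1} := by
            ext ω; simp [sg]
          rw [this]
          exact (herad i).1
      rw [Finset.prod_congr rfl fun i _ => h2 i, Finset.prod_const, Finset.card_univ,
        Fintype.card_fin]
    -- the full-measure event where every sign is ±1
    set Ω₀ : Set Ω := ⋂ i, ({ω | ε i ω = 1} ∪ {ω | ε i ω = -1}) with hΩ₀def
    have hΩ₀ae : ∀ᵐ ω ∂μ, ω ∈ Ω₀ := by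
      have hone : ∀ i : Fin m, μ ({ω | ε i ω = 1} ∪ {ω | ε i ω = -1}) = 1 := by
        intro i
        have hd : Disjoint {ω | ε i ω = 1} {ω | ε i ω = -1} := by
          rw [Set.disjoint_left]
          intro ω h1 h2
          simp only [Set.mem_setOf_eq] at h1 h2
          rw [h1] at h2
          norm_num at h2
        have hm2 : MeasurableSet {ω | ε i ω = -1} :=
          (hemeas i) (measurableSet_singleton (-1))
        rw [measure_union hd hm2, (herad i).1, (herad i).2]
        rw [ENNReal.add_halves]
      have hcompl : ∀ i : Fin m, μ ({ω | ε i ω = 1} ∪ {ω | ε i ω = -1})ᶜ = 0 := by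
        intro i
        have hms : MeasurableSet ({ω | ε i ω = 1} ∪ {ω | ε i ω = -1}) :=
          ((hemeas i) (measurableSet_singleton 1)).union
            ((hemeas i) (measurableSet_singleton (-1)))
        rw [prob_compl_eq_zero_iff hms]
        exact hone i
      have h0 : μ Ω₀ᶜ = 0 := by
        rw [hΩ₀def, Set.compl_iInter]
        refine le_antisymm ?_ zero_le
        calc μ (⋃ i, ({ω | ε i ω = 1} ∪ {ω | ε i ω = -1})ᶜ)
            ≤ ∑' i, μ (({ω | ε i ω = 1} ∪ {ω | ε i ω = -1})ᶜ) := measure_iUnion_le _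
        _ = 0 := by
          rw [tsum_congr hcompl]
          simp
      rw [ae_iff]
      exact h0
    -- pointwise partition identity
    have hpt : ∀ ω ∈ Ω₀, G (A ω) (E ω) =
        ∑ b : Fin m → Bool, F b ω * Set.indicator {s₀ b} (fun _ => (1:ℝ)) (E ω) := by
      intro ω hω
      set b₀ : Fin m → Bool := fun i => decide (ε i ω = 1) with hb₀def
      have hEω : E ω = s₀ b₀ := by
        funext i
        have hi := Set.mem_iInter.1 hω i
        rcases hi with h1 | h2
        · simp only [Set.mem_setOf_eq] at h1
          simp [hEdef, hs₀def, hb₀def, sg, h1]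
        · simp only [Set.mem_setOf_eq] at h2
          have hne : ¬ (ε i ω = 1) := by rw [h2]; norm_num
          simp only [hEdef, hs₀def, hb₀def, sg, h2, hne]
          norm_num
      rw [hEω]
      have hind : ∀ b : Fin m → Bool,
          Set.indicator {s₀ b} (fun _ => (1:ℝ)) (s₀ b₀) = if b = b₀ then 1 else 0 := by
        intro b
        by_cases hb : b = b₀
        · subst hb
          rw [if_pos rfl, Set.indicator_of_mem (Set.mem_singleton _)]
        · rw [if_neg hb]
          apply Set.indicator_of_notMem
          simp only [Set.mem_singleton_iff]
          intro hcontra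
          exact hb (hs₀inj b₀ b hcontra).symm
      symm
      rw [Finset.sum_congr rfl fun b _ => by rw [hind b]]
      simp only [mul_ite, mul_one, mul_zero]
      rw [Finset.sum_ite_eq' Finset.univ b₀ fun b => F b ω]
      simp only [Finset.mem_univ, if_true]
      rfl
    -- Step 1 : decompose the integral according to the sign pattern
    have hψbd : ∀ (b : Fin m → Bool) (y : Fin m → ℝ),
        |Set.indicator {s₀ b} (fun _ => (1:ℝ)) y| ≤ 1 := by
      intro b y
      by_cases h : y ∈ ({s₀ b} : Set (Fin m → ℝ))
      · rw [Set.indicator_of_mem h]; norm_num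
      · rw [Set.indicator_of_notMem h]; norm_num
    have hψmeas : ∀ b, Measurable (Set.indicator {s₀ b} (fun _ => (1:ℝ)) : (Fin m → ℝ) → ℝ) :=
      fun b => measurable_const.indicator (measurableSet_singleton _)
    have hprodint : ∀ b, Integrable
        (fun ω => F b ω * Set.indicator {s₀ b} (fun _ => (1:ℝ)) (E ω)) μ := by
      intro b
      apply integrable_of_bounded
        (((hFmeas b).mul ((hψmeas b).comp hEmeas)).aestronglyMeasurable) (τ^2 * 1)
      intro ω
      rw [Pi.mul_apply, Function.comp_apply, abs_mul]
      exact mul_le_mul (hFbd b ω) (hψbd b _) (abs_nonneg _) (by positivity)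
    have hstep1 : ∫ ω, G (A ω) (E ω) ∂μ =
        ∑ b : Fin m → Bool,
          ∫ ω, F b ω * Set.indicator {s₀ b} (fun _ => (1:ℝ)) (E ω) ∂μ := by
      rw [integral_congr_ae (g := fun ω => ∑ b : Fin m → Bool,
          F b ω * Set.indicator {s₀ b} (fun _ => (1:ℝ)) (E ω))]
      · exact integral_finset_sum _ fun b _ => hprodint b
      · filter_upwards [hΩ₀ae] with ω hω
        exact hpt ω hω
    -- Step 2 : independence splits off the indicator
    have htoReal : ((1/2 : ENNReal) ^ m).toReal = (1/2 : ℝ)^m := by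
      rw [ENNReal.toReal_pow]
      norm_num
    have hstep2 : ∀ b : Fin m → Bool,
        ∫ ω, F b ω * Set.indicator {s₀ b} (fun _ => (1:ℝ)) (E ω) ∂μ =
          (1/2 : ℝ)^m * ∫ ω, F b ω ∂μ := by
      intro b
      have hind2 : IndepFun (F b)
          (fun ω => Set.indicator {s₀ b} (fun _ => (1:ℝ)) (E ω)) μ := by
        have h := hae.comp (hGmeas (fun i => sg (b i))) (hψmeas b)
        exact h
      have h2 := hind2.integral_mul_eq_mul_integral (hFmeas b).aestronglyMeasurable
        (((hψmeas b).comp hEmeas).aestronglyMeasurable)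
      have h3 : (fun ω => Set.indicator {s₀ b} (fun _ => (1:ℝ)) (E ω)) =
          Set.indicator (Ωb b) (fun _ => (1:ℝ)) := by
        funext ω
        by_cases h : ω ∈ Ωb b
        · rw [Set.indicator_of_mem h, Set.indicator_of_mem (by exact h)]
        · rw [Set.indicator_of_notMem h, Set.indicator_of_notMem (by exact h)]
      have h4 : ∫ ω, Set.indicator {s₀ b} (fun _ => (1:ℝ)) (E ω) ∂μ = (1/2:ℝ)^m := by
        rw [h3]
        have h5 : Set.indicator (Ωb b) (fun _ : Ω => (1:ℝ)) =
            Set.indicator (Ωb b) (1 : Ω → ℝ) := rfl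
        rw [h5, integral_indicator_one (hΩbmeas b), Measure.real_def, hμΩb b, htoReal]
      calc ∫ ω, F b ω * Set.indicator {s₀ b} (fun _ => (1:ℝ)) (E ω) ∂μ
          = (∫ ω, F b ω ∂μ) *
            ∫ ω, Set.indicator {s₀ b} (fun _ => (1:ℝ)) (E ω) ∂μ := h2
      _ = (1/2:ℝ)^m * ∫ ω, F b ω ∂μ := by rw [h4]; ring
    -- Step 3 : pull the constant and sum inside the integral
    have hstep3 : ∑ b : Fin m → Bool, (1/2:ℝ)^m * ∫ ω, F b ω ∂μ =
        ∫ ω, (1/2:ℝ)^m * ∑ b : Fin m → Bool, F b ω ∂μ := by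
      rw [← Finset.mul_sum, ← integral_finset_sum _ (fun b _ => hFint b), integral_const_mul]
    -- pointwise bound via the contraction principle
    have hMbd : ∀ (ω : Ω) (i : Fin m), ∀ v ∈ S,
        |dotp (a i ω) v| ≤ ∑ i', euclNorm (a i' ω) := by
      intro ω i v hv
      refine (dotp_bound_norm _ _ hv.2).trans ?_
      exact Finset.single_le_sum (f := fun i' => euclNorm (a i' ω))
        (fun i' _ => euclNorm_nonneg _) (Finset.mem_univ i)
    have hlip : ∀ x y : ℝ, |(1/(m:ℝ)) * phiTrunc τ x - (1/(m:ℝ)) * phiTrunc τ y| ≤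
        (2*τ/(m:ℝ)) * |x - y| := by
      intro x y
      rw [← mul_sub, abs_mul, abs_of_nonneg (by positivity : (0:ℝ) ≤ 1/(m:ℝ))]
      calc (1/(m:ℝ)) * |phiTrunc τ x - phiTrunc τ y| ≤ (1/(m:ℝ)) * (2*τ*|x-y|) :=
        mul_le_mul_of_nonneg_left (phiTrunc_lip hτ0 x y) (by positivity)
      _ = (2*τ/(m:ℝ)) * |x-y| := by ring
    set d : Fin m → Fin (2*k) → Ω → ℝ := fun i j ω => dotp (a i ω) (fun p => U p j) with hddef
    set hfun : Ω → ℝ := fun ω => ∑ i, ∑ j, (d i j ω)^2 with hhdef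
    have hfun0 : ∀ ω, 0 ≤ hfun ω := fun ω =>
      Finset.sum_nonneg fun i _ => Finset.sum_nonneg fun j _ => sq_nonneg _
    have hptbd : ∀ ω : Ω, (1/2:ℝ)^m * ∑ b : Fin m → Bool, F b ω ≤
        (4*τ/(m:ℝ)) * Real.sqrt (hfun ω) := by
      intro ω
      have hFrep : ∀ b : Fin m → Bool, F b ω =
          sSup ((fun v => |∑ i, sg (b i) *
            ((1/(m:ℝ)) * phiTrunc τ (dotp (a i ω) v))|) '' S) := by
        intro b
        have h1 : F b ω = sSup ((fun v =>
            |(1/(m:ℝ)) * ∑ i, sg (b i) * phiTrunc τ (dotp (a i ω) v)|) '' S) := by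
          show G (A ω) (fun i => sg (b i)) = _
          rw [← hGeq (A ω) (fun i => sg (b i))]
          rw [biSup_eq_csSup S ⟨v₀, hv₀S⟩ _ (fun v => abs_nonneg _) _
            (hterm_bd (A ω) (fun i => sg (b i)))]
        rw [h1]
        congr 1
        apply Set.image_congr'
        intro v
        rw [Finset.mul_sum]
        congr 1
        apply Finset.sum_congr rfl
        intro i _
        ring
      have hcontr := contraction_abs (S := S) ⟨v₀, hv₀S⟩ (fun i v => dotp (a i ω) v)
          (fun u => (1/(m:ℝ)) * phiTrunc τ u) (2*τ/(m:ℝ)) (∑ i', euclNorm (a i' ω))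
          (by positivity) hlip
          (by show (1/(m:ℝ)) * phiTrunc τ 0 = 0
              rw [phiTrunc_zero hτ0, mul_zero]) (hMbd ω)
      set w : (Fin m → Bool) → Fin (2*k) → ℝ := fun b j => ∑ i, sg (b i) * d i j ω with hwdef
      have hlin : ∀ b : Fin m → Bool,
          sSup ((fun v => |∑ i, sg (b i) * ((2*τ/(m:ℝ)) * dotp (a i ω) v)|) '' S) ≤
            (2*τ/(m:ℝ)) * euclNorm (w b) := by
        intro b
        apply csSup_le (Set.Nonempty.image _ ⟨v₀, hv₀S⟩)
        rintro _ ⟨v, hv, rfl⟩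
        have h1 : ∑ i, sg (b i) * ((2*τ/(m:ℝ)) * dotp (a i ω) v) =
            (2*τ/(m:ℝ)) * dotp (fun p => ∑ i, sg (b i) * a i ω p) v := by
          rw [dotp_sum_left (fun i p => sg (b i) * a i ω p)]
          rw [Finset.mul_sum]
          apply Finset.sum_congr rfl
          intro i _
          rw [dotp_smul_left]
          ring
        show |∑ i, sg (b i) * ((2*τ/(m:ℝ)) * dotp (a i ω) v)| ≤ _
        rw [h1, abs_mul, abs_of_nonneg (by positivity : (0:ℝ) ≤ 2*τ/(m:ℝ))]
        apply mul_le_mul_of_nonneg_left _ (by positivity : (0:ℝ) ≤ 2*τ/(m:ℝ))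
        have h2 := dotp_bound_on_S hU (fun p => ∑ i, sg (b i) * a i ω p) v hv
        refine h2.trans (le_of_eq ?_)
        congr 1
        funext j
        calc ∑ p, (∑ i, sg (b i) * a i ω p) * U p j
            = ∑ p, ∑ i, sg (b i) * (a i ω p * U p j) := by
              apply Finset.sum_congr rfl
              intro p _
              rw [Finset.sum_mul]
              apply Finset.sum_congr rfl
              intro i _
              ring
        _ = ∑ i, ∑ p, sg (b i) * (a i ω p * U p j) := Finset.sum_comm
        _ = ∑ i, sg (b i) * d i j ω := by
              apply Finset.sum_congr rfl
              intro i _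
              rw [← Finset.mul_sum]
              rfl
      have horth : (1/2:ℝ)^m * ∑ b : Fin m → Bool, euclNormSq (w b) = hfun ω := by
        have h1 : ∑ b : Fin m → Bool, euclNormSq (w b) =
            ∑ b : Fin m → Bool, ∑ j, (∑ i, sg (b i) * d i j ω)^2 := rfl
        rw [h1, Finset.sum_comm]
        rw [Finset.sum_congr rfl fun j (_ : j ∈ Finset.univ) => sum_sq_signs (fun i => d i j ω)]
        rw [← Finset.mul_sum]
        rw [← mul_assoc]
        have h2 : ((1:ℝ)/2)^m * 2^m = 1 := by
          rw [← mul_pow]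
          norm_num
        rw [h2, one_mul]
        rw [hhdef]
        exact Finset.sum_comm
      have havg := avg_le_sqrt_avg (fun b => euclNorm (w b)) (fun b => euclNorm_nonneg _)
      calc (1/2:ℝ)^m * ∑ b : Fin m → Bool, F b ω
          = (1/2:ℝ)^m * ∑ b : Fin m → Bool, sSup ((fun v => |∑ i, sg (b i) *
              ((1/(m:ℝ)) * phiTrunc τ (dotp (a i ω) v))|) '' S) := by
            rw [Finset.sum_congr rfl fun b _ => hFrep b]
      _ ≤ (1/2:ℝ)^m * (2 * ∑ b : Fin m → Bool, sSup ((fun v => |∑ i, sg (b i) *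
              ((2*τ/(m:ℝ)) * dotp (a i ω) v)|) '' S)) :=
            mul_le_mul_of_nonneg_left hcontr (by positivity)
      _ ≤ (1/2:ℝ)^m * (2 * ∑ b : Fin m → Bool, (2*τ/(m:ℝ)) * euclNorm (w b)) := by
            have hsum := Finset.sum_le_sum fun b (_ : b ∈ Finset.univ) => hlin b
            have h0 : (0:ℝ) ≤ (1/2:ℝ)^m := by positivity
            nlinarith [hsum]
      _ = (4*τ/(m:ℝ)) * ((1/2:ℝ)^m * ∑ b : Fin m → Bool, euclNorm (w b)) := by
            rw [← Finset.mul_sum]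
            ring
      _ ≤ (4*τ/(m:ℝ)) * Real.sqrt ((1/2:ℝ)^m *
              ∑ b : Fin m → Bool, euclNorm (w b)^2) :=
            mul_le_mul_of_nonneg_left havg (by positivity)
      _ = (4*τ/(m:ℝ)) * Real.sqrt (hfun ω) := by
            rw [Finset.sum_congr rfl fun b (_ : b ∈ Finset.univ) => euclNorm_sq (w b)]
            rw [horth]
    -- integrability and value of hfun
    have hd2 : ∀ (i : Fin m) (j : Fin (2*k)),
        Integrable (fun ω => (d i j ω)^2) μ ∧ ∫ ω, (d i j ω)^2 ∂μ = 1 := by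
      intro i j
      set u : Fin n → ℝ := fun p => U p j with hudef
      have hu : ∑ p, u p * u p = 1 := by
        have h := Uorth hU j j
        rw [if_pos rfl] at h
        exact h
      have hmeasg : Measurable (fun y : Fin n → ℝ => (dotp y u)^2) :=
        ((continuous_dotp_left u).pow 2).measurable
      have hid : IdentDistrib (fun ω => (dotp (a i ω) u)^2)
          (fun ω => (dotp (a₀ ω) u)^2) μ μ := (haid i).comp hmeasg
      have ha₀ : AEMeasurable a₀ μ := (haid i).aemeasurable_snd
      have hdiag : ∀ p, Integrable (fun ω => a₀ ω p * a₀ ω p) μ := by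
        intro p
        by_contra hcon
        have h0 := integral_undef hcon
        rw [hiso p p, if_pos rfl] at h0
        norm_num at h0
      have hcoord : ∀ p, AEMeasurable (fun ω => a₀ ω p) μ :=
        fun p => (measurable_pi_apply p).comp_aemeasurable ha₀
      have hcross : ∀ p q, Integrable (fun ω => a₀ ω p * a₀ ω q) μ := by
        intro p q
        refine Integrable.mono'
          (g := fun ω => (1/2) * (a₀ ω p * a₀ ω p + a₀ ω q * a₀ ω q))
          (((hdiag p).add (hdiag q)).const_mul _)
          (((hcoord p).mul (hcoord q)).aestronglyMeasurable) ?_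
        filter_upwards with ω
        rw [Real.norm_eq_abs]
        rcases le_total 0 (a₀ ω p * a₀ ω q) with h | h
        · rw [abs_of_nonneg h]
          nlinarith [sq_nonneg (a₀ ω p - a₀ ω q)]
        · rw [abs_of_nonpos h]
          nlinarith [sq_nonneg (a₀ ω p + a₀ ω q)]
      have hexp : (fun ω => (dotp (a₀ ω) u)^2) =
          fun ω => ∑ p, ∑ q, (u p * u q) * (a₀ ω p * a₀ ω q) :=
        funext fun ω => dotp_sq_expand (a₀ ω) u
      have hsq_int : Integrable (fun ω => (dotp (a₀ ω) u)^2) μ := by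
        rw [hexp]
        apply integrable_finset_sum
        intro p _
        apply integrable_finset_sum
        intro q _
        exact (hcross p q).const_mul _
      have hsq_val : ∫ ω, (dotp (a₀ ω) u)^2 ∂μ = 1 := by
        rw [hexp]
        rw [integral_finset_sum _ (fun p _ =>
          integrable_finset_sum _ (fun q _ => (hcross p q).const_mul _))]
        have h5 : ∀ p, ∫ ω, ∑ q, (u p * u q) * (a₀ ω p * a₀ ω q) ∂μ = u p * u p := by
          intro p
          rw [integral_finset_sum _ (fun q _ => (hcross p q).const_mul _)]
          have h6 : ∀ q, ∫ ω, (u p * u q) * (a₀ ω p * a₀ ω q) ∂μ =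
              if p = q then u p * u p else 0 := by
            intro q
            rw [integral_const_mul, hiso p q]
            by_cases hpq : p = q <;> simp [hpq]
          rw [Finset.sum_congr rfl fun q _ => h6 q]
          rw [Finset.sum_ite_eq Finset.univ p fun _ => u p * u p,
            if_pos (Finset.mem_univ p)]
        rw [Finset.sum_congr rfl fun p _ => h5 p, hu]
      constructor
      · rw [show (fun ω => (d i j ω)^2) = fun ω => (dotp (a i ω) u)^2 from rfl]
        rw [hid.integrable_iff]
        exact hsq_int
      · rw [show (fun ω => (d i j ω)^2) = fun ω => (dotp (a i ω) u)^2 from rfl]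
        rw [hid.integral_eq]
        exact hsq_val
    have hfun_int : Integrable hfun μ := by
      apply integrable_finset_sum
      intro i _
      apply integrable_finset_sum
      intro j _
      exact (hd2 i j).1
    have hfun_val : ∫ ω, hfun ω ∂μ = (m : ℝ) * ((2*k : ℕ) : ℝ) := by
      rw [show hfun = fun ω => ∑ i, ∑ j, (d i j ω)^2 from rfl]
      rw [integral_finset_sum _ (fun i _ => integrable_finset_sum _ (fun j _ => (hd2 i j).1))]
      have h5 : ∀ i : Fin m, ∫ ω, ∑ j, (d i j ω)^2 ∂μ = ((2*k : ℕ) : ℝ) := by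
        intro i
        rw [integral_finset_sum _ (fun j _ => (hd2 i j).1)]
        rw [Finset.sum_congr rfl fun j _ => (hd2 i j).2]
        rw [Finset.sum_const, Finset.card_univ, Fintype.card_fin, nsmul_eq_mul, mul_one]
      rw [Finset.sum_congr rfl fun i _ => h5 i]
      rw [Finset.sum_const, Finset.card_univ, Fintype.card_fin, nsmul_eq_mul]
    have hsqrt_int : Integrable (fun ω => Real.sqrt (hfun ω)) μ :=
      integrable_sqrt hfun_int hfun0
    -- final assembly
    have hintegrand_eq : (fun ω : Ω =>
        ⨆ v ∈ S, |(1 / (m : ℝ)) * ∑ i, ε i ω * phiTrunc τ (dotp (a i ω) v)|) =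
        fun ω => G (A ω) (E ω) := by
      funext ω
      exact hGeq (A ω) (E ω)
    rw [hintegrand_eq, hstep1]
    rw [Finset.sum_congr rfl fun b _ => hstep2 b]
    rw [hstep3]
    have hmono : ∫ ω, (1/2:ℝ)^m * ∑ b : Fin m → Bool, F b ω ∂μ ≤
        ∫ ω, (4*τ/(m:ℝ)) * Real.sqrt (hfun ω) ∂μ := by
      refine integral_mono ?_ (hsqrt_int.const_mul _) hptbd
      exact (integrable_finset_sum _ fun b _ => hFint b).const_mul _
    refine hmono.trans ?_
    rw [integral_const_mul]
    have h8 : ∫ ω, Real.sqrt (hfun ω) ∂μ ≤ Real.sqrt ((m:ℝ) * ((2*k : ℕ):ℝ)) := by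
      refine (integral_sqrt_le hfun_int hfun0).trans ?_
      rw [hfun_val]
    calc (4*τ/(m:ℝ)) * ∫ ω, Real.sqrt (hfun ω) ∂μ
        ≤ (4*τ/(m:ℝ)) * Real.sqrt ((m:ℝ) * ((2*k:ℕ):ℝ)) :=
          mul_le_mul_of_nonneg_left h8 (by positivity)
    _ = 4 * τ * Real.sqrt (2 * (k:ℝ) / (m:ℝ)) := by
        rcases Nat.eq_zero_or_pos m with hm | hm
        · subst hm
          simp
        · have hmpos : (0:ℝ) < (m:ℝ) := by exact_mod_cast hm
          have hcast : ((2*k : ℕ):ℝ) = 2*(k:ℝ) := by push_cast; ring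
          rw [hcast]
          rw [show (2*(k:ℝ)/(m:ℝ)) = ((m:ℝ) * (2*(k:ℝ))) / ((m:ℝ)^2) by
            field_simp]
          rw [Real.sqrt_div (by positivity) ((m:ℝ)^2)]
          rw [Real.sqrt_sq hmpos.le]
          field_simp



end
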